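/- Let F be a field of characteristic zero, f ∈ F(x) a rational function, λ ∈ F with λ ≠ 0, and let h ∈ F(x₁,x₂) satisfy (∂h/∂x₁)·x₂ + (∂h/∂x₂)·x₂·f(x₁) = λ·h with h ≠ 0. Then f is constant, i.e. f ∈ F. -/

import Mathlib

/-- The image of the variable `xᵢ` in the rational function field `F(x₁,x₂)`. -/
noncomputable def Xv (F : Type*) [Field F] (i : Fin 2) :
    FractionRing (MvPolynomial (Fin 2) F) :=
  algebraMap (MvPolynomial (Fin 2) F) (FractionRing (MvPolynomial (Fin 2) F)) (MvPolynomial.X i)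

section helpers
open Polynomial

theorem coeff_mul_lb_eq {R : Type*} [CommSemiring R] (u v : R[X]) (s t : ℕ)
    (hu : ∀ i < s, u.coeff i = 0) (hv : ∀ j < t, v.coeff j = 0) :
    (u * v).coeff (s + t) = u.coeff s * v.coeff t := by
  rw [coeff_mul]
  rw [Finset.sum_eq_single (s, t)]
  · intro ij hij hne
    rw [Finset.HasAntidiagonal.mem_antidiagonal] at hij
    rcases lt_or_ge ij.1 s with hlt | hge
    · rw [hu _ hlt, zero_mul]
    · have : ij.2 < t := by
        rcases lt_or_eq_of_le hge with h' | h'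
        · omega
        · exfalso; apply hne; have h2 : ij.2 = t := by omega
          exact Prod.ext h'.symm h2
      rw [hv _ this, mul_zero]
  · intro hmem
    exfalso; exact hmem (Finset.HasAntidiagonal.mem_antidiagonal.2 rfl)

theorem coeff_mul_lb_zero {R : Type*} [CommSemiring R] (u v : R[X]) (s t k : ℕ)
    (hu : ∀ i < s, u.coeff i = 0) (hv : ∀ j < t, v.coeff j = 0) (hk : k < s + t) :
    (u * v).coeff k = 0 := by
  rw [coeff_mul]
  apply Finset.sum_eq_zero
  intro ij hij
  rw [Finset.HasAntidiagonal.mem_antidiagonal] at hij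
  rcases lt_or_ge ij.1 s with hlt | hge
  · rw [hu _ hlt, zero_mul]
  · rw [hv ij.2 (by omega), mul_zero]

theorem coeff_derivative_mul_X {R : Type*} [CommSemiring R] (u : R[X]) (i : ℕ) :
    (derivative u * X).coeff i = u.coeff i * (i : R) := by
  cases i with
  | zero => simp [mul_coeff_zero]
  | succ j => rw [coeff_mul_X, coeff_derivative]; push_cast; ring

end helpers

set_option maxHeartbeats 1000000 in
set_option synthInstance.maxHeartbeats 400000 in
open MvPolynomial in
theorem deriv_apply_algebraMap (F : Type*) [Field F]
    (d : Derivation F (FractionRing (MvPolynomial (Fin 2) F))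
      (FractionRing (MvPolynomial (Fin 2) F)))
    (z : MvPolynomial (Fin 2) F) :
    d (algebraMap (MvPolynomial (Fin 2) F) _ z)
      = algebraMap (MvPolynomial (Fin 2) F) _ (pderiv 0 z) * d (Xv F 0)
        + algebraMap (MvPolynomial (Fin 2) F) _ (pderiv 1 z) * d (Xv F 1) := by
  induction z using MvPolynomial.induction_on with
  | C c =>
      have : (algebraMap (MvPolynomial (Fin 2) F) (FractionRing (MvPolynomial (Fin 2) F))) (C c)
          = algebraMap F _ c := by
        rw [IsScalarTower.algebraMap_apply F (MvPolynomial (Fin 2) F), algebraMap_eq]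
      rw [this]
      simp
  | add p q hp hq =>
      rw [map_add, map_add, hp, hq, map_add, map_add, map_add, map_add]
      ring
  | mul_X p i hp =>
      have hXv : ∀ j : Fin 2, (algebraMap (MvPolynomial (Fin 2) F)
          (FractionRing (MvPolynomial (Fin 2) F))) (X j) = Xv F j := fun j => rfl
      rw [map_mul, Derivation.leibniz, smul_eq_mul, smul_eq_mul, hp, hXv]
      have e0 : (pderiv (0 : Fin 2)) (p * X i) = pderiv 0 p * X i + p * pderiv 0 (X i) := by
        rw [Derivation.leibniz, smul_eq_mul, smul_eq_mul]; ring
      have e1 : (pderiv (1 : Fin 2)) (p * X i) = pderiv 1 p * X i + p * pderiv 1 (X i) := by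
        rw [Derivation.leibniz, smul_eq_mul, smul_eq_mul]; ring
      rw [e0, e1]
      fin_cases i
      · rw [show ((⟨0, by omega⟩ : Fin 2)) = (0 : Fin 2) from rfl]
        rw [pderiv_X, pderiv_X, Pi.single_eq_same, Pi.single_eq_of_ne (by decide)]
        simp only [mul_one, mul_zero, add_zero, map_add, map_mul, hXv]
        ring
      · rw [show ((⟨1, by omega⟩ : Fin 2)) = (1 : Fin 2) from rfl]
        rw [pderiv_X, pderiv_X, Pi.single_eq_same, Pi.single_eq_of_ne (by decide)]
        simp only [mul_one, mul_zero, add_zero, map_add, map_mul, hXv]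
        ring

open Polynomial MvPolynomial in
noncomputable def phiP (F : Type*) [CommRing F] :
    MvPolynomial (Fin 2) F →ₐ[F] Polynomial (Polynomial F) :=
  MvPolynomial.aeval ![Polynomial.C Polynomial.X, Polynomial.X]

open Polynomial MvPolynomial in
theorem phiP_leftinv (F : Type*) [CommRing F] (z : MvPolynomial (Fin 2) F) :
    Polynomial.eval₂ (Polynomial.eval₂RingHom (MvPolynomial.C (σ := Fin 2))
      (MvPolynomial.X 0)) (MvPolynomial.X 1) (phiP F z) = z := by
  induction z using MvPolynomial.induction_on with
  | C c => simp [phiP]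
  | add p q hp hq => simp only [map_add, Polynomial.eval₂_add, hp, hq]
  | mul_X p i hp =>
      rw [map_mul, Polynomial.eval₂_mul, hp]
      congr 1
      fin_cases i <;> simp [phiP]

open Polynomial MvPolynomial in
theorem phiP_injective (F : Type*) [CommRing F] : Function.Injective (phiP F) := by
  intro a b hab
  have := phiP_leftinv F a
  rw [hab, phiP_leftinv] at this
  exact this.symm

open Polynomial MvPolynomial in
theorem phiP_pderiv1 (F : Type*) [CommRing F] (z : MvPolynomial (Fin 2) F) :
    phiP F (pderiv 1 z) = derivative (phiP F z) := by
  induction z using MvPolynomial.induction_on with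
  | C c => simp [phiP]
  | add p q hp hq => simp only [map_add, hp, hq]
  | mul_X p i hp =>
      have e1 : (pderiv (1 : Fin 2)) (p * X i) = pderiv 1 p * X i + p * pderiv 1 (X i) := by
        rw [Derivation.leibniz, smul_eq_mul, smul_eq_mul]; ring
      rw [e1, map_add, map_mul, map_mul, hp, map_mul, derivative_mul]
      fin_cases i
      · rw [show ((⟨0, by omega⟩ : Fin 2)) = (0 : Fin 2) from rfl]
        rw [pderiv_X, Pi.single_eq_of_ne (by decide)]
        simp [phiP]
      · rw [show ((⟨1, by omega⟩ : Fin 2)) = (1 : Fin 2) from rfl]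
        rw [pderiv_X, Pi.single_eq_same]
        simp [phiP]

open Polynomial MvPolynomial in
theorem phiP_pderiv0 (F : Type*) [CommRing F] (z : MvPolynomial (Fin 2) F) (k : ℕ) :
    (phiP F (pderiv 0 z)).coeff k = derivative ((phiP F z).coeff k) := by
  induction z using MvPolynomial.induction_on generalizing k with
  | C c =>
      simp only [pderiv_C, map_zero, Polynomial.coeff_zero]
      have : phiP F (MvPolynomial.C c) = Polynomial.C (Polynomial.C c) := by simp [phiP]
      rw [this, Polynomial.coeff_C]
      split <;> simp
  | add p q hp hq => simp only [map_add, Polynomial.coeff_add, hp, hq]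
  | mul_X p i hp =>
      have e0 : (pderiv (0 : Fin 2)) (p * X i) = pderiv 0 p * X i + p * pderiv 0 (X i) := by
        rw [Derivation.leibniz, smul_eq_mul, smul_eq_mul]; ring
      rw [e0, map_add, map_mul, map_mul]
      fin_cases i
      · rw [show ((⟨0, by omega⟩ : Fin 2)) = (0 : Fin 2) from rfl]
        rw [pderiv_X, Pi.single_eq_same, map_one, mul_one]
        have hX0 : phiP F (X (0 : Fin 2)) = Polynomial.C Polynomial.X := by simp [phiP]
        simp only [map_mul, hX0]
        rw [Polynomial.coeff_add, Polynomial.coeff_mul_C, Polynomial.coeff_mul_C, hp,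
          derivative_mul, derivative_X]
        simp
      · rw [show ((⟨1, by omega⟩ : Fin 2)) = (1 : Fin 2) from rfl]
        rw [pderiv_X, Pi.single_eq_of_ne (by decide)]
        have hX1 : phiP F (X (1 : Fin 2)) = Polynomial.X := by simp [phiP]
        simp only [map_zero, mul_zero, add_zero, map_mul, hX1]
        cases k with
        | zero => simp [Polynomial.mul_coeff_zero]
        | succ j => rw [Polynomial.coeff_mul_X, Polynomial.coeff_mul_X, hp]

open Polynomial MvPolynomial in
theorem phiP_aevalX0 (F : Type*) [CommRing F] (P : Polynomial F) :
    phiP F (Polynomial.aeval (MvPolynomial.X (0 : Fin 2)) P) = Polynomial.C P := by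
  rw [← Polynomial.aeval_algHom_apply]
  have hX0 : phiP F (X (0 : Fin 2)) = Polynomial.C Polynomial.X := by simp [phiP]
  rw [hX0]
  rw [show (Polynomial.C : Polynomial F →+* Polynomial (Polynomial F)) Polynomial.X
      = Polynomial.CAlgHom (R := F) Polynomial.X from rfl]
  rw [Polynomial.aeval_algHom_apply, Polynomial.aeval_X_left_apply]
  rfl


set_option maxHeartbeats 2000000 in
set_option synthInstance.maxHeartbeats 1000000 in
/-- If `h ∈ F(x₁,x₂)` is a nonzero solution of the Darboux eigenvalue equation
`(∂h/∂x₁)·x₂ + (∂h/∂x₂)·x₂·f(x₁) = λ·h` (with `λ ≠ 0`) for the vector field of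
the Poizat equation `y'' = y' f(y)`, then `f` is constant. Here `ι` is the
embedding of `F(x)` into `F(x₁,x₂)` sending `x` to `x₁`. -/
theorem poizat_darboux_forces_f_constant
    (F : Type*) [Field F] [CharZero F]
    (d1 d2 : Derivation F (FractionRing (MvPolynomial (Fin 2) F))
      (FractionRing (MvPolynomial (Fin 2) F)))
    (hd11 : d1 (Xv F 0) = 1) (hd12 : d1 (Xv F 1) = 0)
    (hd21 : d2 (Xv F 0) = 0) (hd22 : d2 (Xv F 1) = 1)
    (ι : RatFunc F →+* FractionRing (MvPolynomial (Fin 2) F))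
    (hιC : ∀ c : F, ι (RatFunc.C c) = algebraMap F _ c)
    (hιX : ι RatFunc.X = Xv F 0)
    (f : RatFunc F) (l : F) (hl : l ≠ 0)
    (h : FractionRing (MvPolynomial (Fin 2) F)) (hh : h ≠ 0)
    (heq : d1 h * Xv F 1 + d2 h * (Xv F 1 * ι f) = algebraMap F _ l * h) :
    ∃ c : F, f = RatFunc.C c := by
  classical
  -- abbreviations
  have hD1 : ∀ z : MvPolynomial (Fin 2) F,
      d1 (algebraMap (MvPolynomial (Fin 2) F) _ z)
        = algebraMap (MvPolynomial (Fin 2) F) _ (MvPolynomial.pderiv 0 z) := by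
    intro z
    rw [deriv_apply_algebraMap F d1 z, hd11, hd12, mul_one, mul_zero, add_zero]
  have hD2 : ∀ z : MvPolynomial (Fin 2) F,
      d2 (algebraMap (MvPolynomial (Fin 2) F) _ z)
        = algebraMap (MvPolynomial (Fin 2) F) _ (MvPolynomial.pderiv 1 z) := by
    intro z
    rw [deriv_apply_algebraMap F d2 z, hd21, hd22, mul_one, mul_zero, zero_add]
  obtain ⟨A, B, hBmem, hAB⟩ := IsFractionRing.div_surjective (A := MvPolynomial (Fin 2) F) h
  have hinj := IsFractionRing.injective (MvPolynomial (Fin 2) F)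
    (FractionRing (MvPolynomial (Fin 2) F))
  have hB0 : B ≠ 0 := nonZeroDivisors.ne_zero hBmem
  have hamB : algebraMap (MvPolynomial (Fin 2) F) (FractionRing (MvPolynomial (Fin 2) F)) B ≠ 0 := by
    rw [Ne, map_eq_zero_iff _ hinj]; exact hB0
  have e1 : h * algebraMap (MvPolynomial (Fin 2) F) _ B
      = algebraMap (MvPolynomial (Fin 2) F) _ A := by
    rw [← hAB, div_mul_cancel₀ _ hamB]
  have hA0 : A ≠ 0 := by
    intro hA
    apply hh
    rw [← hAB, hA, map_zero, zero_div]
  have e2 : d1 h * algebraMap (MvPolynomial (Fin 2) F) _ B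
      + h * algebraMap (MvPolynomial (Fin 2) F) _ (MvPolynomial.pderiv 0 B)
      = algebraMap (MvPolynomial (Fin 2) F) _ (MvPolynomial.pderiv 0 A) := by
    have := congrArg d1 e1
    rw [Derivation.leibniz, smul_eq_mul, smul_eq_mul, hD1, hD1] at this
    linear_combination this
  have e3 : d2 h * algebraMap (MvPolynomial (Fin 2) F) _ B
      + h * algebraMap (MvPolynomial (Fin 2) F) _ (MvPolynomial.pderiv 1 B)
      = algebraMap (MvPolynomial (Fin 2) F) _ (MvPolynomial.pderiv 1 A) := by
    have := congrArg d2 e1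
    rw [Derivation.leibniz, smul_eq_mul, smul_eq_mul, hD2, hD2] at this
    linear_combination this
  -- the rational function f as a quotient of polynomials in x₁
  set p := f.num with hp
  set q := f.denom with hq
  have hq0 : q ≠ 0 := f.denom_ne_zero
  have hι_poly : ∀ P : Polynomial F, ι (algebraMap (Polynomial F) (RatFunc F) P)
      = algebraMap (MvPolynomial (Fin 2) F) _
          (Polynomial.aeval (MvPolynomial.X (0 : Fin 2)) P) := by
    intro P
    induction P using Polynomial.induction_on with
    | C a =>
        rw [RatFunc.algebraMap_C, hιC, Polynomial.aeval_C]
        rw [MvPolynomial.algebraMap_eq, IsScalarTower.algebraMap_apply F (MvPolynomial (Fin 2) F),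
          MvPolynomial.algebraMap_eq]
    | add P Q hP hQ => rw [map_add, map_add, hP, hQ, map_add, map_add]
    | monomial n a hP =>
        have h2 : (Polynomial.C a * Polynomial.X ^ (n + 1))
            = (Polynomial.C a * Polynomial.X ^ n) * Polynomial.X := by ring
        rw [h2, map_mul, map_mul, hP, map_mul, RatFunc.algebraMap_X, hιX]
        conv_rhs => rw [map_mul, Polynomial.aeval_X, map_mul]
        simp only [map_mul]
        rfl
  have e4 : ι f * algebraMap (MvPolynomial (Fin 2) F) _
        (Polynomial.aeval (MvPolynomial.X (0 : Fin 2)) q)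
      = algebraMap (MvPolynomial (Fin 2) F) _
        (Polynomial.aeval (MvPolynomial.X (0 : Fin 2)) p) := by
    have hfr : f * algebraMap (Polynomial F) (RatFunc F) q
        = algebraMap (Polynomial F) (RatFunc F) p := by
      rw [← RatFunc.num_div_denom f, div_mul_cancel₀]
      exact RatFunc.algebraMap_ne_zero hq0
    have := congrArg ι hfr
    rw [map_mul, hι_poly, hι_poly] at this
    exact this
  -- the key identity in the fraction field
  have keyK : (algebraMap (MvPolynomial (Fin 2) F) _ (MvPolynomial.pderiv 0 A) * Xv F 1
          * algebraMap (MvPolynomial (Fin 2) F) _ B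
        - algebraMap (MvPolynomial (Fin 2) F) _ A
          * (algebraMap (MvPolynomial (Fin 2) F) _ (MvPolynomial.pderiv 0 B) * Xv F 1))
        * algebraMap (MvPolynomial (Fin 2) F) _ (Polynomial.aeval (MvPolynomial.X (0 : Fin 2)) q)
      + (algebraMap (MvPolynomial (Fin 2) F) _ (MvPolynomial.pderiv 1 A) * Xv F 1
          * algebraMap (MvPolynomial (Fin 2) F) _ B
        - algebraMap (MvPolynomial (Fin 2) F) _ A
          * (algebraMap (MvPolynomial (Fin 2) F) _ (MvPolynomial.pderiv 1 B) * Xv F 1))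
        * algebraMap (MvPolynomial (Fin 2) F) _ (Polynomial.aeval (MvPolynomial.X (0 : Fin 2)) p)
      = algebraMap F _ l * algebraMap (MvPolynomial (Fin 2) F) _ A
          * algebraMap (MvPolynomial (Fin 2) F) _ B
          * algebraMap (MvPolynomial (Fin 2) F) _
              (Polynomial.aeval (MvPolynomial.X (0 : Fin 2)) q) := by
    linear_combination
      (algebraMap (MvPolynomial (Fin 2) F) _ B * algebraMap (MvPolynomial (Fin 2) F) _ B
        * algebraMap (MvPolynomial (Fin 2) F) _
            (Polynomial.aeval (MvPolynomial.X (0 : Fin 2)) q)) * heq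
      - (Xv F 1 * algebraMap (MvPolynomial (Fin 2) F) _ B
        * algebraMap (MvPolynomial (Fin 2) F) _
            (Polynomial.aeval (MvPolynomial.X (0 : Fin 2)) q)) * e2
      - (Xv F 1 * algebraMap (MvPolynomial (Fin 2) F) _ B
        * algebraMap (MvPolynomial (Fin 2) F) _
            (Polynomial.aeval (MvPolynomial.X (0 : Fin 2)) p)) * e3
      + (algebraMap (MvPolynomial (Fin 2) F) _
            (Polynomial.aeval (MvPolynomial.X (0 : Fin 2)) q)
          * algebraMap (MvPolynomial (Fin 2) F) _ (MvPolynomial.pderiv 0 B) * Xv F 1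
        + algebraMap (MvPolynomial (Fin 2) F) _
            (Polynomial.aeval (MvPolynomial.X (0 : Fin 2)) p)
          * algebraMap (MvPolynomial (Fin 2) F) _ (MvPolynomial.pderiv 1 B) * Xv F 1
        + algebraMap F _ l * algebraMap (MvPolynomial (Fin 2) F) _ B
          * algebraMap (MvPolynomial (Fin 2) F) _
              (Polynomial.aeval (MvPolynomial.X (0 : Fin 2)) q)) * e1
      - (d2 h * algebraMap (MvPolynomial (Fin 2) F) _ B
        * algebraMap (MvPolynomial (Fin 2) F) _ B * Xv F 1) * e4
  -- transfer the key identity to the polynomial ring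
  have hXv1 : (algebraMap (MvPolynomial (Fin 2) F) (FractionRing (MvPolynomial (Fin 2) F)))
      (MvPolynomial.X (1 : Fin 2)) = Xv F 1 := rfl
  have hCl : (algebraMap (MvPolynomial (Fin 2) F) (FractionRing (MvPolynomial (Fin 2) F)))
      (MvPolynomial.C l) = algebraMap F _ l := by
    rw [IsScalarTower.algebraMap_apply F (MvPolynomial (Fin 2) F), MvPolynomial.algebraMap_eq]
  have keyR : (MvPolynomial.pderiv 0 A * MvPolynomial.X 1 * B
        - A * (MvPolynomial.pderiv 0 B * MvPolynomial.X 1))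
        * (Polynomial.aeval (MvPolynomial.X (0 : Fin 2)) q)
      + (MvPolynomial.pderiv 1 A * MvPolynomial.X 1 * B
        - A * (MvPolynomial.pderiv 1 B * MvPolynomial.X 1))
        * (Polynomial.aeval (MvPolynomial.X (0 : Fin 2)) p)
      = MvPolynomial.C l * A * B * (Polynomial.aeval (MvPolynomial.X (0 : Fin 2)) q) := by
    apply hinj
    simp only [map_add, map_sub, map_mul, hXv1, hCl]
    exact keyK
  -- transfer to Polynomial (Polynomial F)
  have hX1S : phiP F (MvPolynomial.X (1 : Fin 2)) = Polynomial.X := by simp [phiP]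
  have hClS : phiP F (MvPolynomial.C l) = Polynomial.C (Polynomial.C l) := by simp [phiP]
  have keyS := congrArg (phiP F) keyR
  simp only [map_add, map_sub, map_mul, phiP_pderiv1, phiP_aevalX0, hX1S, hClS] at keyS
  set a := phiP F A with haA
  set b := phiP F B with hbB
  have ha0 : a ≠ 0 := by
    intro hz
    exact hA0 (phiP_injective F (by rw [← haA, hz, map_zero]))
  have hb0 : b ≠ 0 := by
    intro hz
    exact hB0 (phiP_injective F (by rw [← hbB, hz, map_zero]))
  set n := a.natTrailingDegree with hn
  set m := b.natTrailingDegree with hm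
  have hla : ∀ i < n, a.coeff i = 0 := fun i hi =>
    Polynomial.coeff_eq_zero_of_lt_natTrailingDegree hi
  have hlb : ∀ j < m, b.coeff j = 0 := fun j hj =>
    Polynomial.coeff_eq_zero_of_lt_natTrailingDegree hj
  have han : a.coeff n ≠ 0 := by
    rw [show a.coeff n = a.trailingCoeff from rfl]
    exact mt Polynomial.trailingCoeff_eq_zero.mp ha0
  have hbm : b.coeff m ≠ 0 := by
    rw [show b.coeff m = b.trailingCoeff from rfl]
    exact mt Polynomial.trailingCoeff_eq_zero.mp hb0
  have hA1X : ∀ i < n + 1, (phiP F (MvPolynomial.pderiv 0 A) * Polynomial.X).coeff i = 0 := by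
    intro i hi
    cases i with
    | zero => rw [Polynomial.mul_coeff_zero, Polynomial.coeff_X_zero, mul_zero]
    | succ j =>
        rw [Polynomial.coeff_mul_X, phiP_pderiv0, ← haA, hla j (by omega), map_zero]
  have hB1X : ∀ i < m + 1, (phiP F (MvPolynomial.pderiv 0 B) * Polynomial.X).coeff i = 0 := by
    intro i hi
    cases i with
    | zero => rw [Polynomial.mul_coeff_zero, Polynomial.coeff_X_zero, mul_zero]
    | succ j =>
        rw [Polynomial.coeff_mul_X, phiP_pderiv0, ← hbB, hlb j (by omega), map_zero]
  have hdaX : ∀ i < n, (Polynomial.derivative a * Polynomial.X).coeff i = 0 := by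
    intro i hi
    rw [coeff_derivative_mul_X, hla i hi, zero_mul]
  have hdbX : ∀ j < m, (Polynomial.derivative b * Polynomial.X).coeff j = 0 := by
    intro j hj
    rw [coeff_derivative_mul_X, hlb j hj, zero_mul]
  have hco := congrArg (fun z => Polynomial.coeff z (n + m)) keyS
  simp only [Polynomial.coeff_add, Polynomial.coeff_mul_C, Polynomial.coeff_sub] at hco
  rw [coeff_mul_lb_zero _ _ (n + 1) m _ hA1X hlb (by omega),
    coeff_mul_lb_zero _ _ n (m + 1) _ hla hB1X (by omega),
    coeff_mul_lb_eq _ _ n m hdaX hlb,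
    coeff_mul_lb_eq _ _ n m hla hdbX,
    coeff_derivative_mul_X, coeff_derivative_mul_X,
    mul_assoc (Polynomial.C (Polynomial.C l)) a b, Polynomial.coeff_C_mul,
    coeff_mul_lb_eq _ _ n m hla hlb] at hco
  -- cancel the nonzero trailing coefficients
  have hmain : (((n : Polynomial F) - (m : Polynomial F)) * p) * (a.coeff n * b.coeff m)
      = (Polynomial.C l * q) * (a.coeff n * b.coeff m) := by linear_combination hco
  have hcancel := mul_right_cancel₀ (mul_ne_zero han hbm) hmain
  have hc : Polynomial.C ((n : F) - (m : F)) * p = Polynomial.C l * q := by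
    rw [map_sub, Polynomial.C_eq_natCast, Polynomial.C_eq_natCast]
    exact hcancel
  set c0 : F := (n : F) - (m : F) with hc0def
  have hCl0 : Polynomial.C l ≠ 0 := Polynomial.C_ne_zero.mpr hl
  have hc0 : c0 ≠ 0 := by
    intro hz
    rw [hz, map_zero, zero_mul] at hc
    exact mul_ne_zero hCl0 hq0 hc.symm
  refine ⟨c0⁻¹ * l, ?_⟩
  have hpq : p = Polynomial.C (c0⁻¹ * l) * q := by
    apply mul_left_cancel₀ (Polynomial.C_ne_zero.mpr hc0)
    rw [hc, ← mul_assoc, ← map_mul, mul_inv_cancel_left₀ hc0]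
  rw [← RatFunc.num_div_denom f, ← hp, ← hq, hpq, map_mul, RatFunc.algebraMap_C,
    mul_div_assoc, div_self (RatFunc.algebraMap_ne_zero hq0), mul_one]
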